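/- Fix n ≥ 1 and define φ : ℝⁿ × ℝⁿ → ℝ × ℝⁿ × ℝⁿ by φ(x,y) := (−⟪x,y⟫, x, y − ⟪x,y⟫x). Then φ pulls back the 1-jet contact form du − p·dq to the form −2y·dx − x·dy along the unit sphere: for every (x,y) with ‖x‖ = 1 and every tangent vector (ẋ,ẏ) ∈ ℝⁿ × ℝⁿ with ⟪x,ẋ⟫ = 0, writing (u̇, q̇, ṗ) := Dφ(x,y)(ẋ,ẏ) and p := y − ⟪x,y⟫x, one has u̇ − ⟪p, q̇⟫ = −2⟪y,ẋ⟫ − ⟪x,ẏ⟫. -/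

import Mathlib

open scoped RealInnerProductSpace

noncomputable section

/-- The map `φ(x,y) = (−⟪x,y⟫, x, y − ⟪x,y⟫x)` pulls back the 1-jet contact form
`du − p·dq` to `−2y·dx − x·dy` along the unit sphere `{‖x‖ = 1}`. -/
theorem statement_4 (n : ℕ) (hn : 1 ≤ n)
    (φ : EuclideanSpace ℝ (Fin n) × EuclideanSpace ℝ (Fin n) →
      ℝ × EuclideanSpace ℝ (Fin n) × EuclideanSpace ℝ (Fin n))
    (hφ : ∀ x y : EuclideanSpace ℝ (Fin n),
      φ (x, y) = (-⟪x, y⟫, x, y - ⟪x, y⟫ • x)) :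
    ∀ x y vx vy : EuclideanSpace ℝ (Fin n), ‖x‖ = 1 → ⟪x, vx⟫ = 0 →
      (fderiv ℝ φ (x, y) (vx, vy)).1
          - ⟪y - ⟪x, y⟫ • x, (fderiv ℝ φ (x, y) (vx, vy)).2.1⟫
        = -2 * ⟪y, vx⟫ - ⟪x, vy⟫ := by
  intro x y vx vy hx hxvx
  let E := EuclideanSpace ℝ (Fin n)
  have hφeq : φ = fun p : E × E => (-⟪p.1, p.2⟫, p.1, p.2 - ⟪p.1, p.2⟫ • p.1) := by
    funext p
    obtain ⟨a, b⟩ := p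
    exact hφ a b
  have hinner : HasFDerivAt (fun p : E × E => (⟪p.1, p.2⟫ : ℝ))
      ((fderivInnerCLM ℝ (x, y)).comp
        ((ContinuousLinearMap.fst ℝ E E).prod (ContinuousLinearMap.snd ℝ E E))) (x, y) := by
    have h := (hasFDerivAt_fst (𝕜 := ℝ) (p := (x, y))).inner ℝ
      (hasFDerivAt_snd (𝕜 := ℝ) (p := (x, y)))
    convert h using 1
  have h3 : HasFDerivAt (fun p : E × E => p.2 - ⟪p.1, p.2⟫ • p.1)
      ((ContinuousLinearMap.snd ℝ E E) -
        ((⟪x, y⟫ : ℝ) • (ContinuousLinearMap.fst ℝ E E) +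
          (((fderivInnerCLM ℝ (x, y)).comp
            ((ContinuousLinearMap.fst ℝ E E).prod
              (ContinuousLinearMap.snd ℝ E E))).smulRight x))) (x, y) := by
    exact (hasFDerivAt_snd (𝕜 := ℝ) (p := (x, y))).sub
      (hinner.smul (hasFDerivAt_fst (𝕜 := ℝ) (p := (x, y))))
  have hφ' : HasFDerivAt φ
      ((-(((fderivInnerCLM ℝ (x, y)).comp
          ((ContinuousLinearMap.fst ℝ E E).prod (ContinuousLinearMap.snd ℝ E E))))).prod
        (((ContinuousLinearMap.fst ℝ E E)).prod
          ((ContinuousLinearMap.snd ℝ E E) -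
            ((⟪x, y⟫ : ℝ) • (ContinuousLinearMap.fst ℝ E E) +
              (((fderivInnerCLM ℝ (x, y)).comp
                ((ContinuousLinearMap.fst ℝ E E).prod
                  (ContinuousLinearMap.snd ℝ E E))).smulRight x))))) (x, y) := by
    rw [hφeq]
    exact (HasFDerivAt.prodMk hinner.neg ((hasFDerivAt_fst (𝕜 := ℝ) (p := (x, y))).prodMk h3))
  rw [hφ'.fderiv]
  simp only [ContinuousLinearMap.prod_apply, ContinuousLinearMap.neg_apply,
    ContinuousLinearMap.comp_apply, ContinuousLinearMap.coe_fst', ContinuousLinearMap.coe_snd',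
    fderivInnerCLM_apply]
  rw [inner_sub_left, real_inner_smul_left, hxvx]
  rw [real_inner_comm y vx] at *
  ring
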